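/- Fix real numbers 0 < r_w < Δ. Suppose R : (0, ∞) → ℝ satisfies, for all sufficiently large r_e, 0 < R(r_e) ≤ Δ and -π + R(r_e)²/r_e² + π·r_w²/r_e² = -2·ln(Δ/R(r_e)). Then R(r_e) converges to Δ·e^{-π/2} as r_e → ∞; in particular, in the limit the well-block radius satisfies the classical Peaceman relation ln(Δ/R₀) = π/2. -/
import Mathlib


open Filter

/-- If `R(r_e)` solves the 2-D PSS well-block equation with `0 < R(r_e) ≤ Δ`
for all sufficiently large `r_e`, then `R(r_e) → Δ·e^{-π/2}` as `r_e → ∞`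
(the classical Peaceman relation `ln(Δ/R₀) = π/2`). -/
theorem stmt_9 (r_w Δ : ℝ) (hrw : 0 < r_w) (hwΔ : r_w < Δ) (R : ℝ → ℝ)
    (hR : ∀ᶠ r_e in atTop, 0 < R r_e ∧ R r_e ≤ Δ ∧
      -Real.pi + (R r_e) ^ 2 / r_e ^ 2 + Real.pi * r_w ^ 2 / r_e ^ 2 =
        -2 * Real.log (Δ / R r_e)) :
    Tendsto R atTop (nhds (Δ * Real.exp (-Real.pi / 2))) := by
  have hΔ : 0 < Δ := hrw.trans hwΔ
  set g : ℝ → ℝ := fun r => -Real.pi / 2 + (R r ^ 2 + Real.pi * r_w ^ 2) / (2 * r ^ 2)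
    with hgdef
  have heq : ∀ᶠ r in atTop, R r = Δ * Real.exp (g r) := by
    filter_upwards [hR, eventually_gt_atTop (0 : ℝ)] with r h hr
    obtain ⟨h1, h2, h3⟩ := h
    have hr2 : (r : ℝ) ^ 2 ≠ 0 := by positivity
    have hRr : R r ≠ 0 := ne_of_gt h1
    have hlog : Real.log (Δ / R r) = -(g r) := by
      simp only [hgdef]
      field_simp at h3 ⊢
      nlinarith [h3]
    have hdiv : Δ / R r = Real.exp (-(g r)) := by
      rw [← hlog, Real.exp_log (by positivity)]
    rw [div_eq_iff hRr] at hdiv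
    rw [hdiv, Real.exp_neg]
    field_simp
  have hgt : Tendsto g atTop (nhds (-Real.pi / 2)) := by
    have hub : Tendsto (fun r : ℝ => -Real.pi / 2 + (Δ ^ 2 + Real.pi * r_w ^ 2) / (2 * r ^ 2))
        atTop (nhds (-Real.pi / 2)) := by
      have h0 : Tendsto (fun r : ℝ => (Δ ^ 2 + Real.pi * r_w ^ 2) / (2 * r ^ 2)) atTop
          (nhds 0) := by
        apply Tendsto.div_atTop (tendsto_const_nhds)
        exact Tendsto.const_mul_atTop two_pos (tendsto_pow_atTop two_ne_zero)
      simpa using tendsto_const_nhds.add h0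
    refine tendsto_of_tendsto_of_tendsto_of_le_of_le' tendsto_const_nhds hub ?_ ?_
    · filter_upwards [hR, eventually_gt_atTop (0 : ℝ)] with r h hr
      have : 0 ≤ (R r ^ 2 + Real.pi * r_w ^ 2) / (2 * r ^ 2) := by positivity
      simp only [hgdef]; linarith
    · filter_upwards [hR, eventually_gt_atTop (0 : ℝ)] with r h hr
      obtain ⟨h1, h2, _⟩ := h
      have hden : (0 : ℝ) < 2 * r ^ 2 := by positivity
      have : (R r ^ 2 + Real.pi * r_w ^ 2) / (2 * r ^ 2)
          ≤ (Δ ^ 2 + Real.pi * r_w ^ 2) / (2 * r ^ 2) := by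
        gcongr
      simp only [hgdef]; linarith
  have hmain : Tendsto (fun r => Δ * Real.exp (g r)) atTop
      (nhds (Δ * Real.exp (-Real.pi / 2))) :=
    (Real.continuous_exp.tendsto _ |>.comp hgt).const_mul Δ
  exact hmain.congr' (heq.mono fun r h => h.symm)
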